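/- Let λ_n be the largest eigenvalue of the normalized Laplacian of a weighted graph G whose total edge weight is e (so Σ_u d(u) = 2e). Then MAX-CUT(G) ≤ e·λ_n/2. -/

import Mathlib

open Matrix BigOperators

/-- The PSD step: μ•1 - L is PSD when μ bounds all eigenvalues. -/
lemma psd_aux {n : ℕ} (L : Matrix (Fin n) (Fin n) ℝ) (hH : L.IsHermitian) (μ : ℝ)
    (hμmax : ∀ i, hH.eigenvalues i ≤ μ) :
    (μ • (1 : Matrix (Fin n) (Fin n) ℝ) - L).PosSemidef := by
  have hU := (Matrix.mem_unitaryGroup_iff).mp (hH.eigenvectorUnitary).2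
  have h1 : μ • (1 : Matrix (Fin n) (Fin n) ℝ) - L
      = (hH.eigenvectorUnitary : Matrix (Fin n) (Fin n) ℝ) *
        Matrix.diagonal (fun i => μ - hH.eigenvalues i) *
        (star (hH.eigenvectorUnitary : Matrix (Fin n) (Fin n) ℝ)) := by
    conv_lhs => rw [hH.spectral_theorem]
    have hdiag : Matrix.diagonal (fun i => μ - hH.eigenvalues i)
        = μ • (1 : Matrix (Fin n) (Fin n) ℝ) - Matrix.diagonal (RCLike.ofReal ∘ hH.eigenvalues) := by
      ext i j
      by_cases h : i = j <;> simp [Matrix.diagonal, Matrix.one_apply, h]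
    rw [hdiag, Matrix.mul_sub, Matrix.sub_mul]
    congr 1
    rw [Matrix.mul_smul, Matrix.mul_one, Matrix.smul_mul, hU]
  rw [h1]
  exact (Matrix.posSemidef_diagonal_iff.mpr
    (fun i => sub_nonneg.2 (hμmax i))).mul_mul_conjTranspose_same _

theorem stmt11 {n : ℕ} (w : Fin n → Fin n → ℝ)
    (hsym : ∀ i j, w i j = w j i) (hnonneg : ∀ i j, 0 ≤ w i j)
    (d : Fin n → ℝ) (hd : ∀ i, d i = ∑ j, w i j) (hdpos : ∀ i, 0 < d i)
    (L : Matrix (Fin n) (Fin n) ℝ)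
    (hL : L = 1 - Matrix.of (fun i j => w i j / (Real.sqrt (d i) * Real.sqrt (d j))))
    (hH : L.IsHermitian) (μ : ℝ)
    (hμmem : ∃ i, hH.eigenvalues i = μ) (hμmax : ∀ i, hH.eigenvalues i ≤ μ)
    (eTot : ℝ) (heTot : 2 * eTot = ∑ u, d u) :
    ∀ S : Finset (Fin n), (∑ i ∈ S, ∑ j ∈ Sᶜ, w i j) ≤ eTot * μ / 2 := by
  intro S
  classical
  set x : Fin n → ℝ := fun i => if i ∈ S then 1 else -1 with hxdef
  set y : Fin n → ℝ := fun i => Real.sqrt (d i) * x i with hydef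
  have hx2 : ∀ i, x i * x i = 1 := by
    intro i; by_cases h : i ∈ S <;> simp [hxdef, h]
  have hy2 : ∀ i, y i * y i = d i := by
    intro i
    have h1 : Real.sqrt (d i) * Real.sqrt (d i) = d i := Real.mul_self_sqrt (hdpos i).le
    calc y i * y i = (Real.sqrt (d i) * Real.sqrt (d i)) * (x i * x i) := by
          simp only [hydef]; ring
      _ = d i := by rw [h1, hx2 i, mul_one]
  have hPSD := psd_aux L hH μ hμmax
  have key := hPSD.dotProduct_mulVec_nonneg y
  have hentry : ∀ i j, (μ • (1 : Matrix (Fin n) (Fin n) ℝ) - L) i j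
      = (if i = j then (μ - 1) else 0) + w i j / (Real.sqrt (d i) * Real.sqrt (d j)) := by
    intro i j
    by_cases h : i = j <;>
      simp [hL, Matrix.sub_apply, Matrix.smul_apply, Matrix.one_apply, h] <;> ring
  have hterm : ∀ i j, y i * ((μ • (1 : Matrix (Fin n) (Fin n) ℝ) - L) i j * y j)
      = (if i = j then (μ - 1) * d i else 0) + x i * x j * w i j := by
    intro i j
    have hsi : Real.sqrt (d i) ≠ 0 := (Real.sqrt_pos.mpr (hdpos i)).ne'
    have hsj : Real.sqrt (d j) ≠ 0 := (Real.sqrt_pos.mpr (hdpos j)).ne'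
    rw [hentry i j]
    by_cases h : i = j
    · subst h
      simp only [if_pos rfl, if_true]
      have h2 : y i * ((μ - 1 + w i i / (Real.sqrt (d i) * Real.sqrt (d i))) * y i)
          = (μ - 1) * (y i * y i) + (y i * y i) * (w i i / (Real.sqrt (d i) * Real.sqrt (d i))) := by
        ring
      rw [h2, hy2 i, Real.mul_self_sqrt (hdpos i).le,
        mul_div_cancel₀ _ (hdpos i).ne', hx2 i, one_mul]
    · simp only [if_neg h, zero_add]
      simp only [hydef]
      field_simp
  have hyL : star y ⬝ᵥ (μ • (1 : Matrix (Fin n) (Fin n) ℝ) - L) *ᵥ y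
      = (μ - 1) * (∑ i, d i) + ∑ i, ∑ j, x i * x j * w i j := by
    calc star y ⬝ᵥ (μ • (1 : Matrix (Fin n) (Fin n) ℝ) - L) *ᵥ y
        = ∑ i, ∑ j, y i * ((μ • (1 : Matrix (Fin n) (Fin n) ℝ) - L) i j * y j) := by
          simp [dotProduct, Matrix.mulVec, Finset.mul_sum]
      _ = ∑ i, ∑ j, ((if i = j then (μ - 1) * d i else 0) + x i * x j * w i j) :=
          Finset.sum_congr rfl fun i _ => Finset.sum_congr rfl fun j _ => hterm i j
      _ = (μ - 1) * (∑ i, d i) + ∑ i, ∑ j, x i * x j * w i j := by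
          simp [Finset.sum_add_distrib, Finset.sum_ite_eq, Finset.mul_sum]
  rw [hyL] at key
  -- combinatorial identities
  have hsplit : ∀ f : Fin n → ℝ, ∑ i, f i = (∑ i ∈ S, f i) + ∑ i ∈ Sᶜ, f i :=
    fun f => (Finset.sum_add_sum_compl S f).symm
  have hcc : (∑ i ∈ Sᶜ, ∑ j ∈ S, w i j) = ∑ i ∈ S, ∑ j ∈ Sᶜ, w i j := by
    rw [Finset.sum_comm]
    exact Finset.sum_congr rfl fun i _ => Finset.sum_congr rfl fun j _ => hsym _ _
  have hdsum : (∑ i, d i)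
      = ((∑ i ∈ S, ∑ j ∈ S, w i j) + ∑ i ∈ S, ∑ j ∈ Sᶜ, w i j)
        + ((∑ i ∈ S, ∑ j ∈ Sᶜ, w i j) + ∑ i ∈ Sᶜ, ∑ j ∈ Sᶜ, w i j) := by
    rw [show (∑ i, d i) = ∑ i, ∑ j, w i j from Finset.sum_congr rfl fun i _ => hd i,
      hsplit (fun i => ∑ j, w i j)]
    rw [Finset.sum_congr rfl (fun i _ => hsplit (fun j => w i j)),
      Finset.sum_congr (rfl : Sᶜ = Sᶜ) (fun i _ => hsplit (fun j => w i j)),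
      Finset.sum_add_distrib, Finset.sum_add_distrib, hcc]
  have hQ : (∑ i, ∑ j, x i * x j * w i j)
      = ((∑ i ∈ S, ∑ j ∈ S, w i j) - ∑ i ∈ S, ∑ j ∈ Sᶜ, w i j)
        + (-(∑ i ∈ S, ∑ j ∈ Sᶜ, w i j) + ∑ i ∈ Sᶜ, ∑ j ∈ Sᶜ, w i j) := by
    rw [hsplit (fun i => ∑ j, x i * x j * w i j)]
    have hS : ∀ i ∈ S, (∑ j, x i * x j * w i j)
        = (∑ j ∈ S, w i j) - ∑ j ∈ Sᶜ, w i j := by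
      intro i hi
      rw [hsplit (fun j => x i * x j * w i j)]
      have e1 : (∑ j ∈ S, x i * x j * w i j) = ∑ j ∈ S, w i j :=
        Finset.sum_congr rfl fun j hj => by simp [hxdef, hi, hj]
      have e2 : (∑ j ∈ Sᶜ, x i * x j * w i j) = ∑ j ∈ Sᶜ, -(w i j) :=
        Finset.sum_congr rfl fun j hj => by
          simp [hxdef, hi, Finset.mem_compl.mp hj]
      rw [e1, e2, Finset.sum_neg_distrib]
      ring
    have hC : ∀ i ∈ Sᶜ, (∑ j, x i * x j * w i j)
        = -(∑ j ∈ S, w i j) + ∑ j ∈ Sᶜ, w i j := by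
      intro i hi
      have hi' := Finset.mem_compl.mp hi
      rw [hsplit (fun j => x i * x j * w i j)]
      have e1 : (∑ j ∈ S, x i * x j * w i j) = ∑ j ∈ S, -(w i j) :=
        Finset.sum_congr rfl fun j hj => by simp [hxdef, hi', hj]
      have e2 : (∑ j ∈ Sᶜ, x i * x j * w i j) = ∑ j ∈ Sᶜ, w i j :=
        Finset.sum_congr rfl fun j hj => by
          simp [hxdef, hi', Finset.mem_compl.mp hj]
      rw [e1, e2, Finset.sum_neg_distrib]
    rw [Finset.sum_congr rfl hS, Finset.sum_congr (rfl : Sᶜ = Sᶜ) hC,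
      Finset.sum_sub_distrib, Finset.sum_add_distrib, Finset.sum_neg_distrib, hcc]
  have hQ' : (∑ i, ∑ j, x i * x j * w i j)
      = (∑ i, d i) - 4 * (∑ i ∈ S, ∑ j ∈ Sᶜ, w i j) := by
    rw [hdsum, hQ]; ring
  rw [hQ'] at key
  have h4 : 4 * (∑ i ∈ S, ∑ j ∈ Sᶜ, w i j) ≤ μ * (2 * eTot) := by
    rw [heTot]; linarith
  linarith
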